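/- Let (G,X) be a minimal topological dynamical system. Then the regionally proximal relation is contained in the nilpotent regionally proximal relation of order one: Q(X) ⊆ NRP^[1](X). -/

import Mathlib

/-- Generators of the Host–Kra cube group: `[h]_F` for `F` a hyperface `{ω : ω i = a}`. -/
def hyperfaceGens (G : Type*) [Group G] (d : ℕ) : Set ((Fin d → Bool) → G) :=
  {g | ∃ (h : G) (i : Fin d) (a : Bool), g = fun ω => if ω i = a then h else 1}

/-- Generators of the face cube group: `[h]_F` for `F` an upper hyperface `{ω : ω i = 1}`. -/
def upperFaceGens (G : Type*) [Group G] (d : ℕ) : Set ((Fin d → Bool) → G) :=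
  {g | ∃ (h : G) (i : Fin d), g = fun ω => if ω i = true then h else 1}

/-- The Host–Kra cube group `HK^[d]`. -/
def HK (G : Type*) [Group G] (d : ℕ) : Subgroup ((Fin d → Bool) → G) :=
  Subgroup.closure (hyperfaceGens G d)

/-- The face cube group `F^[d]`. -/
def FG (G : Type*) [Group G] (d : ℕ) : Subgroup ((Fin d → Bool) → G) :=
  Subgroup.closure (upperFaceGens G d)

/-- Coordinatewise action of `G^[d]` on `X^[d]`. -/
def cubeAct {G X : Type*} [Group G] [MulAction G X] {d : ℕ}
    (g : (Fin d → Bool) → G) (c : (Fin d → Bool) → X) : (Fin d → Bool) → X :=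
  fun ω => g ω • c ω

/-- The dynamical cubespace `C_G^[d](X)`: the closure of the set of `HK^[d]`-translates
of constant configurations. -/
def cubeSpace (G X : Type*) [Group G] [MulAction G X] [TopologicalSpace X] (d : ℕ) :
    Set ((Fin d → Bool) → X) :=
  closure {c | ∃ g ∈ HK G d, ∃ x : X, c = cubeAct g (fun _ => x)}

/-- The lower corner `⌞^[d](x,y)`: value `y` at `1⃗`, value `x` elsewhere. -/
def lowerCorner {X : Type*} (d : ℕ) (x y : X) : (Fin d → Bool) → X :=
  fun ω => if ω = (fun _ => true) then y else x

/-- The upper corner `⌝^[d](x,y)`: value `x` at `0⃗`, value `y` elsewhere. -/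
def upperCorner {X : Type*} (d : ℕ) (x y : X) : (Fin d → Bool) → X :=
  fun ω => if ω = (fun _ => false) then x else y

/-- The nilpotent regionally proximal relation of order `d`. -/
def NRP (G X : Type*) [Group G] [MulAction G X] [TopologicalSpace X] (d : ℕ) :
    Set (X × X) :=
  {p | lowerCorner (d + 1) p.1 p.2 ∈ cubeSpace G X (d + 1)}

/-- `Y_x^[d](X)`: the closure of the `F^[d]`-orbit of the constant configuration `x^[d]`. -/
def Yx (G : Type*) {X : Type*} [Group G] [MulAction G X] [TopologicalSpace X]
    (d : ℕ) (x : X) : Set ((Fin d → Bool) → X) :=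
  closure {c | ∃ f ∈ FG G d, c = cubeAct f (fun _ => x)}

/-- `C_x^[d](X)`: cubes whose value at `0⃗` is `x`. -/
def Cx (G : Type*) {X : Type*} [Group G] [MulAction G X] [TopologicalSpace X]
    (d : ℕ) (x : X) : Set ((Fin d → Bool) → X) :=
  {c ∈ cubeSpace G X d | c (fun _ => false) = x}


/-- The regionally proximal relation `Q(X)` is contained in `NRP^[1](X)` for minimal
systems.  Here `(x,y) ∈ Q(X)` is expressed by the equivalent closure condition:
there is `z` with `((x,y),(z,z))` in the closure of
`{((x',y'),(g•x',g•y'))}`, which encodes the existence of nets `xᵢ → x`, `yᵢ → y`,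
`gᵢ` with `gᵢxᵢ → z` and `gᵢyᵢ → z`. -/
theorem Q_subset_NRP_one
    {G X : Type*} [Group G] [TopologicalSpace G] [IsTopologicalGroup G]
    [TopologicalSpace X] [CompactSpace X] [T2Space X]
    [MulAction G X] [ContinuousSMul G X]
    (hmin : ∀ x : X, Dense (MulAction.orbit G x)) :
    {p : X × X | ∃ z : X, ((p.1, p.2), (z, z)) ∈
      closure {q : (X × X) × (X × X) | ∃ (x' y' : X) (g : G),
        q = ((x', y'), (g • x', g • y'))}} ⊆ NRP G X 1 := by
  rintro ⟨x, y⟩ ⟨z, hz⟩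
  show lowerCorner 2 x y ∈ cubeSpace G X 2
  rw [cubeSpace, mem_closure_iff_nhds]
  intro N hN
  classical
  rw [nhds_pi, Filter.mem_pi] at hN
  obtain ⟨I, hIfin, t, ht, hts⟩ := hN
  set one2 : Fin 2 → Bool := fun _ => true with hone2
  have hty : t one2 ∈ nhds y := by simpa [lowerCorner, one2] using ht one2
  have htx : ∀ ω, ω ≠ one2 → t ω ∈ nhds x := by
    intro ω hω
    have := ht ω
    simpa [lowerCorner, one2, hω] using this
  have hM : (⋂ ω, if ω = one2 then (Set.univ : Set X) else t ω) ∈ nhds x := by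
    refine Filter.iInter_mem.2 fun ω => ?_
    by_cases h : ω = one2
    · simp [h]
    · simpa [h] using htx ω h
  obtain ⟨A, hAsub, hAopen, hxA⟩ := mem_nhds_iff.1 hM
  obtain ⟨B, hBsub, hBopen, hyB⟩ := mem_nhds_iff.1 hty
  obtain ⟨_, ⟨q, rfl⟩, hqz⟩ := (hmin z).exists_mem_open hAopen ⟨x, hxA⟩
  set W : Set X := (fun w => q • w) ⁻¹' A with hW
  have hWopen : IsOpen W := hAopen.preimage (continuous_const_smul q)
  have hzW : z ∈ W := hqz
  have hnb : ((A ×ˢ B) ×ˢ (W ×ˢ W)) ∈ nhds ((x, y), (z, z)) :=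
    ((hAopen.prod hBopen).prod (hWopen.prod hWopen)).mem_nhds
      ⟨⟨hxA, hyB⟩, hzW, hzW⟩
  obtain ⟨p, hp1, x', y', g, rfl⟩ := mem_closure_iff_nhds.1 hz _ hnb
  obtain ⟨⟨hx'A, hy'B⟩, hgx'W, hgy'W⟩ := hp1
  set u : G := q * g with hu
  have hux' : u • x' ∈ A := by rw [hu, mul_smul]; exact hgx'W
  have huy' : u • y' ∈ A := by rw [hu, mul_smul]; exact hgy'W
  have hO : IsOpen (A ∩ (fun w => u • w) ⁻¹' A) :=
    hAopen.inter (hAopen.preimage (continuous_const_smul u))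
  obtain ⟨_, ⟨v, rfl⟩, hvA, huvA⟩ := (hmin y').exists_mem_open hO ⟨x', hx'A, hux'⟩
  set f : (Fin 2 → Bool) → G :=
    fun ω => (if ω 0 = false then u else 1) * (if ω 1 = false then v else 1) with hf
  have hfHK : f ∈ HK G 2 := by
    refine mul_mem (Subgroup.subset_closure ?_) (Subgroup.subset_closure ?_)
    · exact ⟨u, 0, false, rfl⟩
    · exact ⟨v, 1, false, rfl⟩
  refine ⟨cubeAct f (fun _ => y'), ?_, f, hfHK, y', rfl⟩
  apply hts
  intro ω _
  by_cases h1 : ω = one2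
  · subst h1
    have : cubeAct f (fun _ => y') one2 = y' := by
      simp [cubeAct, hf, one2]
    rw [this]
    exact hBsub hy'B
  · have hmemA : cubeAct f (fun _ => y') ω ∈ A := by
      have hcase : ω 0 = false ∨ ω 1 = false := by
        by_contra hc
        push_neg at hc
        exact h1 (funext fun i => by
          fin_cases i
          · simpa using (Bool.not_eq_false _).mp hc.1
          · simpa using (Bool.not_eq_false _).mp hc.2)
      rcases Bool.eq_false_or_eq_true (ω 0) with h0 | h0 <;>
        rcases Bool.eq_false_or_eq_true (ω 1) with hh1 | hh1
      · -- (true, true): contradiction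
        exfalso
        apply h1
        funext i
        fin_cases i
        · simpa [one2] using h0
        · simpa [one2] using hh1
      · -- (true, false): v
        have : cubeAct f (fun _ => y') ω = v • y' := by
          simp [cubeAct, hf, h0, hh1]
        rw [this]; exact hvA
      · -- (false, true): u
        have : cubeAct f (fun _ => y') ω = u • y' := by
          simp [cubeAct, hf, h0, hh1]
        rw [this]; exact huy'
      · -- (false, false): u * v
        have : cubeAct f (fun _ => y') ω = u • (v • y') := by
          simp [cubeAct, hf, h0, hh1, mul_smul]
        rw [this]; exact huvA
    have hmem := hAsub hmemA
    have := Set.mem_iInter.1 hmem ω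
    simpa [h1] using this
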